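/- For every a ∈ ℂ^m, conj(C(a)) + C(conj(a)) = 0, where conj(a) := (conj(a₁), …, conj(a_m)). -/

import Mathlib

open Complex Filter Real
open Topology

noncomputable section

/-- The point `r e^{iθ}` in the complex plane. -/
def rayPt (r θ : ℝ) : ℂ := (r : ℂ) * Complex.exp (θ * Complex.I)

/-- The branch `X^s := exp(s(log r + iθ))` for `X = r e^{iθ}`. -/
def rayPow (r θ : ℝ) (s : ℂ) : ℂ := Complex.exp (s * ((Real.log r : ℂ) + θ * Complex.I))

/-- `ω := exp(2πi/(m+2))`. -/
def om (m : ℕ) : ℂ := Complex.exp (2 * Real.pi * Complex.I / (m + 2))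

/-- `ω^s := exp((2πi/(m+2)) s)`. -/
def omPow (m : ℕ) (s : ℂ) : ℂ := Complex.exp ((2 * Real.pi * Complex.I / (m + 2)) * s)

/-- The coefficients `b_n(a)` of the formal square root of `1 + a₁ x + ⋯ + a_m x^m`:
`b₀ = 1`, `b_n = (1/2)(a_n - ∑_{i=1}^{n-1} b_i b_{n-i})` (with `a_k = 0` for `k > m`). -/
def bcoef (m : ℕ) (a : Fin m → ℂ) : ℕ → ℂ
  | 0 => 1
  | n + 1 => (1 / 2) * ((if h : n < m then a ⟨n, h⟩ else 0) -
      ∑ i ∈ (Finset.Ico 1 (n + 1)).attach,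
        bcoef m a i.1 * bcoef m a (n + 1 - i.1))
decreasing_by
  all_goals
    have h1 := (Finset.mem_Ico.mp i.2).1
    have h2 := (Finset.mem_Ico.mp i.2).2
    omega

/-- `r_m(a) := -m/4` for odd `m`, `-m/4 - b_{1+m/2}(a)` for even `m`. -/
def rmC (m : ℕ) (a : Fin m → ℂ) : ℂ :=
  if m % 2 = 1 then -(m : ℂ) / 4 else -(m : ℂ) / 4 - bcoef m a (1 + m / 2)

/-- `S(X, a) = ∑_{k=0}^{⌊(m+1)/2⌋} (2 b_k(a)/(m+2-2k)) X^{(m+2-2k)/2}` at `X = r e^{iθ}`. -/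
def Sfun (m : ℕ) (a : Fin m → ℂ) (r θ : ℝ) : ℂ :=
  ∑ k ∈ Finset.range ((m + 1) / 2 + 1),
    (2 * bcoef m a k / ((m : ℂ) + 2 - 2 * (k : ℂ))) * rayPow r θ (((m : ℂ) + 2 - 2 * (k : ℂ)) / 2)

/-- The potential `X^m + a₁ X^{m-1} + ⋯ + a_m`. -/
def pot (m : ℕ) (a : Fin m → ℂ) (X : ℂ) : ℂ :=
  X ^ m + ∑ k : Fin m, a k * X ^ (m - 1 - (k : ℕ))

/-- `ω_k(a) := (ω^k a₁, ω^{2k} a₂, …, ω^{km} a_m)`. -/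
def omAct (m : ℕ) (k : ℤ) (a : Fin m → ℂ) : Fin m → ℂ :=
  fun j => om m ^ (k * (((j : ℕ) : ℤ) + 1)) * a j

/-- Sibuya's asymptotic characterization of the canonical solution of
`-Φ'' + (X^m + a₁X^{m-1} + ⋯ + a_m)Φ = 0`:
`Φ(re^{iθ}) (re^{iθ})^{-r_m(a)} e^{S(re^{iθ},a)} → 1` for every `|θ| < 3π/(m+2)`. -/
def SibAsymp (m : ℕ) (a : Fin m → ℂ) (Φ : ℂ → ℂ) : Prop :=
  ∀ θ : ℝ, |θ| < 3 * Real.pi / (m + 2) →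
    Filter.Tendsto
      (fun r : ℝ => Φ (rayPt r θ) * rayPow r θ (-(rmC m a)) * Complex.exp (Sfun m a r θ))
      Filter.atTop (nhds 1)

local notation "conj'" => starRingEnd ℂ

/-- conj-deriv: if `f` has complex derivative `f'` at `conj z`, then
`fun x => conj (f (conj x))` has derivative `conj f'` at `z`. -/
theorem hasDerivAt_conj_conj {f : ℂ → ℂ} {f' z : ℂ} (hf : HasDerivAt f f' ((starRingEnd ℂ) z)) :
    HasDerivAt (fun x => (starRingEnd ℂ) (f ((starRingEnd ℂ) x))) ((starRingEnd ℂ) f') z := by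
  rw [hasDerivAt_iff_tendsto_slope] at hf ⊢
  have hconj : Tendsto (fun x : ℂ => (starRingEnd ℂ) x) (𝓝[≠] z) (𝓝[≠] ((starRingEnd ℂ) z)) := by
    apply Filter.Tendsto.inf
    · exact (Complex.continuous_conj.tendsto z)
    · apply tendsto_principal_principal.mpr
      intro x hx
      simp only [Set.mem_compl_iff, Set.mem_singleton_iff] at *
      exact fun h => hx (star_injective h)
  have key : ∀ x : ℂ, slope (fun x => (starRingEnd ℂ) (f ((starRingEnd ℂ) x))) z x
      = (starRingEnd ℂ) (slope f ((starRingEnd ℂ) z) ((starRingEnd ℂ) x)) := by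
    intro x
    simp only [slope_def_field]
    rw [map_div₀, map_sub, map_sub]
    simp
  have := (Complex.continuous_conj.tendsto f').comp (hf.comp hconj)
  refine this.congr fun x => ?_
  simp only [Function.comp_apply, ← key]


theorem bcoef_conj (m : ℕ) (a : Fin m → ℂ) (n : ℕ) :
    bcoef m (fun j => conj' (a j)) n = conj' (bcoef m a n) := by
  induction n using Nat.strong_induction_on with
  | _ n ih =>
    match n with
    | 0 => simp [bcoef]
    | n + 1 =>
      rw [bcoef, bcoef]
      rw [map_mul, map_sub]
      congr 1
      · norm_num [map_ofNat]
      congr 1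
      · split <;> simp
      · rw [map_sum]
        apply Finset.sum_congr rfl
        intro i _
        have h1 := (Finset.mem_Ico.mp i.2).1
        have h2 := (Finset.mem_Ico.mp i.2).2
        rw [map_mul, ih i.1 (by omega), ih (n + 1 - i.1) (by omega)]

theorem rmC_conj (m : ℕ) (a : Fin m → ℂ) :
    rmC m (fun j => conj' (a j)) = conj' (rmC m a) := by
  unfold rmC
  split <;> simp [bcoef_conj, map_sub, map_div₀, map_ofNat]

theorem pot_conj (m : ℕ) (a : Fin m → ℂ) (X : ℂ) :
    pot m (fun j => conj' (a j)) (conj' X) = conj' (pot m a X) := by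
  unfold pot
  rw [map_add, map_sum, map_pow]
  congr 1
  apply Finset.sum_congr rfl
  intro k _
  rw [map_mul, map_pow]

theorem rayPow_conj (r θ : ℝ) (s : ℂ) :
    conj' (rayPow r θ s) = rayPow r (-θ) (conj' s) := by
  unfold rayPow
  rw [← Complex.exp_conj]
  congr 1
  simp [map_mul, map_add, map_ofNat]

theorem rayPt_conj (r θ : ℝ) : conj' (rayPt r θ) = rayPt r (-θ) := by
  unfold rayPt
  rw [map_mul, ← Complex.exp_conj]
  simp [map_mul]

theorem Sfun_conj (m : ℕ) (a : Fin m → ℂ) (r θ : ℝ) :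
    conj' (Sfun m a r θ) = Sfun m (fun j => conj' (a j)) r (-θ) := by
  unfold Sfun
  rw [map_sum]
  apply Finset.sum_congr rfl
  intro k _
  rw [map_mul, rayPow_conj, bcoef_conj]
  congr 1
  · rw [map_div₀]
    simp [map_ofNat]
  · congr 1
    rw [map_div₀]
    simp [map_ofNat]

theorem om_conj (m : ℕ) : conj' (om m) = (om m)⁻¹ := by
  unfold om
  rw [← Complex.exp_conj, ← Complex.exp_neg]
  congr 1
  rw [map_div₀]
  simp [map_ofNat]
  ring

theorem omPow_conj (m : ℕ) (s : ℂ) : conj' (omPow m s) = omPow m (-(conj' s)) := by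
  unfold omPow
  rw [← Complex.exp_conj]
  congr 1
  rw [map_mul, map_div₀]
  simp [map_ofNat]
  ring

theorem om_ne_zero (m : ℕ) : om m ≠ 0 := Complex.exp_ne_zero _

theorem omAct_conj (m : ℕ) (k : ℤ) (a : Fin m → ℂ) :
    (fun j => conj' (omAct m k (fun i => conj' (a i)) j)) = omAct m (-k) a := by
  funext j
  unfold omAct
  rw [map_mul]
  simp only [RingHomCompTriple.comp_apply, RingHom.id_apply]
  congr 1
  rw [map_zpow₀, om_conj, inv_zpow, ← zpow_neg]
  congr 1
  ring

namespace Stmt5aux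

variable (m : ℕ) (a : Fin m → ℂ)

def gam (k : ℕ) : ℂ := 2 * bcoef m a k / ((m : ℂ) + 2 - 2 * (k : ℂ))
def ekC (m : ℕ) (k : ℕ) : ℂ := ((m : ℂ) + 2 - 2 * (k : ℂ)) / 2
def ekR (m : ℕ) (k : ℕ) : ℝ := ((m : ℝ) + 2 - 2 * (k : ℝ)) / 2

def Efun (t : ℝ) : ℂ :=
  -(rmC m a) * (Real.log t : ℂ) +
    ∑ k ∈ Finset.range ((m + 1) / 2 + 1), gam m a k * Complex.exp (ekC m k * (Real.log t : ℂ))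

theorem ekC_eq (k : ℕ) : ekC m k = ((ekR m k : ℝ) : ℂ) := by
  unfold ekC ekR; push_cast; ring

theorem K_eq (t : ℝ) :
    rayPow t 0 (-(rmC m a)) * Complex.exp (Sfun m a t 0) = Complex.exp (Efun m a t) := by
  unfold rayPow Sfun Efun gam ekC
  rw [← Complex.exp_add]
  congr 1
  simp only [Complex.ofReal_zero, zero_mul, add_zero]
  congr 1
  apply Finset.sum_congr rfl
  intro k _
  congr 1
  unfold rayPow
  simp only [Complex.ofReal_zero, zero_mul, add_zero]

theorem Efun_re (t : ℝ) (ht : 0 < t) :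
    (Efun m a t).re = -((rmC m a).re) * Real.log t +
      ∑ k ∈ Finset.range ((m + 1) / 2 + 1), (gam m a k).re * t ^ (ekR m k) := by
  unfold Efun
  rw [Complex.add_re, Complex.re_sum]
  congr 1
  · simp [Complex.mul_re]
  · apply Finset.sum_congr rfl
    intro k _
    rw [ekC_eq, ← Complex.ofReal_mul, ← Complex.ofReal_exp]
    rw [Real.rpow_def_of_pos ht, mul_comm (Real.log t)]
    rw [Complex.mul_re, Complex.ofReal_re, Complex.ofReal_im, mul_zero, sub_zero]

def Eder (t : ℝ) : ℂ :=
  -(rmC m a) * ((t : ℂ))⁻¹ +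
    ∑ k ∈ Finset.range ((m + 1) / 2 + 1),
      gam m a k * (Complex.exp (ekC m k * (Real.log t : ℂ)) * (ekC m k * ((t : ℂ))⁻¹))

theorem Efun_hasDeriv (t : ℝ) (ht : 0 < t) : HasDerivAt (Efun m a) (Eder m a t) t := by
  have hlog : HasDerivAt (fun s : ℝ => ((Real.log s : ℝ) : ℂ)) (((t⁻¹ : ℝ) : ℂ)) t :=
    (Real.hasDerivAt_log ht.ne').ofReal_comp
  have hlog' : HasDerivAt (fun s : ℝ => ((Real.log s : ℝ) : ℂ)) (((t : ℂ))⁻¹) t := by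
    rwa [Complex.ofReal_inv] at hlog
  unfold Efun Eder
  apply HasDerivAt.add
  · simpa [mul_comm] using hlog'.const_mul (-(rmC m a))
  · apply HasDerivAt.fun_sum
    intro k _
    have h1 : HasDerivAt (fun s : ℝ => ekC m k * ((Real.log s : ℝ) : ℂ))
        (ekC m k * ((t : ℂ))⁻¹) t := hlog'.const_mul _
    exact (h1.cexp).const_mul _

def C2 (m : ℕ) (a : Fin m → ℂ) : ℝ :=
  ‖rmC m a‖ + ∑ k ∈ Finset.range ((m + 1) / 2 + 1), ‖gam m a k‖ * ‖ekC m k‖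

theorem norm_exp_ek (t : ℝ) (ht : 0 < t) (k : ℕ) :
    ‖Complex.exp (ekC m k * (Real.log t : ℂ))‖ = t ^ (ekR m k) := by
  rw [ekC_eq, ← Complex.ofReal_mul, Complex.norm_exp]
  simp only [Complex.ofReal_re]
  rw [Real.rpow_def_of_pos ht, mul_comm (Real.log t)]

theorem ekR_le (m : ℕ) (k : ℕ) (hk : 1 ≤ k) : ekR m k ≤ (m : ℝ) / 2 := by
  unfold ekR
  have : (1 : ℝ) ≤ (k : ℝ) := by exact_mod_cast hk
  linarith

theorem ekR_sub_one_le (m : ℕ) (k : ℕ) : ekR m k - 1 ≤ (m : ℝ) / 2 := by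
  unfold ekR
  have : (0 : ℝ) ≤ (k : ℝ) := Nat.cast_nonneg k
  linarith

theorem Eder_bound (t : ℝ) (ht : 1 ≤ t) : ‖Eder m a t‖ ≤ C2 m a * t ^ ((m : ℝ) / 2) := by
  have ht0 : (0 : ℝ) < t := lt_of_lt_of_le one_pos ht
  have hrp1 : (1 : ℝ) ≤ t ^ ((m : ℝ) / 2) :=
    Real.one_le_rpow ht (by positivity)
  unfold Eder C2
  refine (norm_add_le _ _).trans ?_
  rw [add_mul]
  apply add_le_add
  · rw [norm_mul, norm_neg]
    have h1 : ‖((t : ℂ))⁻¹‖ ≤ 1 := by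
      rw [norm_inv, Complex.norm_real, Real.norm_eq_abs, abs_of_pos ht0]
      rw [inv_le_one_iff₀]; right; exact ht
    calc ‖rmC m a‖ * ‖((t : ℂ))⁻¹‖ ≤ ‖rmC m a‖ * 1 :=
          mul_le_mul_of_nonneg_left h1 (norm_nonneg _)
      _ = ‖rmC m a‖ := mul_one _
      _ ≤ ‖rmC m a‖ * t ^ ((m : ℝ) / 2) := le_mul_of_one_le_right (norm_nonneg _) hrp1
  · refine (norm_sum_le _ _).trans ?_
    rw [Finset.sum_mul]
    apply Finset.sum_le_sum
    intro k _
    rw [norm_mul, norm_mul, norm_mul, norm_exp_ek m t ht0 k, norm_inv,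
      Complex.norm_real, Real.norm_eq_abs, abs_of_pos ht0]
    have key : t ^ ekR m k * (‖ekC m k‖ * t⁻¹) ≤ ‖ekC m k‖ * t ^ ((m : ℝ) / 2) := by
      have h2 : t ^ ekR m k * t⁻¹ = t ^ (ekR m k - 1) := by
        rw [Real.rpow_sub ht0, Real.rpow_one, div_eq_mul_inv]
      have h3 : t ^ (ekR m k - 1) ≤ t ^ ((m : ℝ) / 2) :=
        Real.rpow_le_rpow_of_exponent_le ht (ekR_sub_one_le m k)
      calc t ^ ekR m k * (‖ekC m k‖ * t⁻¹) = ‖ekC m k‖ * (t ^ ekR m k * t⁻¹) := by ring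
        _ = ‖ekC m k‖ * t ^ (ekR m k - 1) := by rw [h2]
        _ ≤ ‖ekC m k‖ * t ^ ((m : ℝ) / 2) :=
            mul_le_mul_of_nonneg_left h3 (norm_nonneg _)
    calc ‖gam m a k‖ * (t ^ ekR m k * (‖ekC m k‖ * t⁻¹))
        ≤ ‖gam m a k‖ * (‖ekC m k‖ * t ^ ((m : ℝ) / 2)) :=
          mul_le_mul_of_nonneg_left key (norm_nonneg _)
      _ = ‖gam m a k‖ * ‖ekC m k‖ * t ^ ((m : ℝ) / 2) := by ring

theorem log_le_two_rpow (t : ℝ) (ht : 1 ≤ t) (e : ℝ) (he : (1:ℝ)/2 ≤ e) :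
    Real.log t ≤ 2 * t ^ e := by
  have ht0 : (0 : ℝ) < t := lt_of_lt_of_le one_pos ht
  have h1 : Real.log t = 2 * Real.log (Real.sqrt t) := by
    rw [Real.log_sqrt ht0.le]; ring
  have h2 : Real.log (Real.sqrt t) ≤ Real.sqrt t - 1 :=
    Real.log_le_sub_one_of_pos (Real.sqrt_pos.mpr ht0)
  have h3 : Real.sqrt t = t ^ ((1:ℝ)/2) := Real.sqrt_eq_rpow t
  have h4 : t ^ ((1:ℝ)/2) ≤ t ^ e := Real.rpow_le_rpow_of_exponent_le ht he
  nlinarith [Real.sqrt_nonneg t]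

def C5 (m : ℕ) (a : Fin m → ℂ) : ℝ :=
  2 * (∑ k ∈ Finset.range ((m + 1) / 2), ‖gam m a (k + 1)‖) + 4 * ‖rmC m a‖ + 2 * (m : ℝ) + 4

theorem gam_zero : gam m a 0 = 2 / ((m : ℂ) + 2) := by
  unfold gam
  rw [show bcoef m a 0 = 1 by simp [bcoef]]
  norm_num

theorem gam_zero_re : (gam m a 0).re = 2 / ((m : ℝ) + 2) := by
  rw [gam_zero]
  have : (2 : ℂ) / ((m : ℂ) + 2) = (((2 / ((m : ℝ) + 2)) : ℝ) : ℂ) := by push_cast; ring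
  rw [this, Complex.ofReal_re]

theorem ekR_zero : ekR m 0 = (m : ℝ) / 2 + 1 := by unfold ekR; push_cast; ring

/-- The key growth estimate: for `t ≥ 1`,
`2 Re E(t) - (m/2) log (t+1) ≥ t^{m/2} ((4/(m+2)) t - C5)`. -/
theorem L_lower (hm : 1 ≤ m) (t : ℝ) (ht : 1 ≤ t) :
    t ^ ((m : ℝ) / 2) * (4 / ((m : ℝ) + 2) * t - C5 m a) ≤
      2 * (Efun m a t).re - ((m : ℝ) / 2) * Real.log (t + 1) := by
  have ht0 : (0 : ℝ) < t := lt_of_lt_of_le one_pos ht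
  have hrp1 : (1 : ℝ) ≤ t ^ ((m : ℝ) / 2) := Real.one_le_rpow ht (by positivity)
  have hrp0 : (0 : ℝ) < t ^ ((m : ℝ) / 2) := lt_of_lt_of_le one_pos hrp1
  have hm' : (1 : ℝ) ≤ (m : ℝ) := by exact_mod_cast hm
  rw [Efun_re m a t ht0, Finset.sum_range_succ']
  set A := t ^ ((m : ℝ) / 2) with hA
  have hmain : (gam m a 0).re * t ^ ekR m 0 = 2 / ((m : ℝ) + 2) * (A * t) := by
    rw [gam_zero_re, ekR_zero, Real.rpow_add ht0, Real.rpow_one]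
  have hlog1 : Real.log t ≤ 2 * A := log_le_two_rpow t ht _ (by linarith)
  have hlog2 : Real.log (t + 1) ≤ 4 * A := by
    have h1 : Real.log (t + 1) ≤ 2 * (t + 1) ^ ((1:ℝ)/2) :=
      log_le_two_rpow (t + 1) (by linarith) _ le_rfl
    have h2 : (t + 1 : ℝ) ≤ 4 * t := by linarith
    have h3 : (t + 1 : ℝ) ^ ((1:ℝ)/2) ≤ (4 * t) ^ ((1:ℝ)/2) :=
      Real.rpow_le_rpow (by linarith) h2 (by norm_num)
    have h4 : ((4 : ℝ) * t) ^ ((1:ℝ)/2) = 2 * t ^ ((1:ℝ)/2) := by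
      rw [Real.mul_rpow (by norm_num) ht0.le]
      congr 1
      rw [← Real.sqrt_eq_rpow, show (4:ℝ) = 2 ^ 2 by norm_num, Real.sqrt_sq (by norm_num : (0:ℝ) ≤ 2)]
    have h5 : t ^ ((1:ℝ)/2) ≤ A := Real.rpow_le_rpow_of_exponent_le ht (by linarith)
    linarith
  -- tail sum bound
  have htail : -(∑ k ∈ Finset.range ((m + 1) / 2), ‖gam m a (k + 1)‖) * A ≤
      ∑ k ∈ Finset.range ((m + 1) / 2), (gam m a (k + 1)).re * t ^ ekR m (k + 1) := by
    have key : ∀ k ∈ Finset.range ((m + 1) / 2),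
        -(‖gam m a (k + 1)‖ * A) ≤ (gam m a (k + 1)).re * t ^ ekR m (k + 1) := by
      intro k _
      have e1 : t ^ ekR m (k + 1) ≤ A :=
        Real.rpow_le_rpow_of_exponent_le ht (ekR_le m (k + 1) (Nat.le_add_left 1 k))
      have e0 : (0 : ℝ) ≤ t ^ ekR m (k + 1) := (Real.rpow_pos_of_pos ht0 _).le
      have e2 : |(gam m a (k + 1)).re| ≤ ‖gam m a (k + 1)‖ := Complex.abs_re_le_norm _
      have e3 : -((gam m a (k + 1)).re * t ^ ekR m (k + 1)) ≤ ‖gam m a (k + 1)‖ * A := by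
        calc -((gam m a (k + 1)).re * t ^ ekR m (k + 1))
            ≤ |(gam m a (k + 1)).re * t ^ ekR m (k + 1)| := neg_le_abs _
          _ = |(gam m a (k + 1)).re| * t ^ ekR m (k + 1) := by rw [abs_mul, _root_.abs_of_nonneg e0]
          _ ≤ ‖gam m a (k + 1)‖ * A := mul_le_mul e2 e1 e0 (norm_nonneg _)
      linarith
    calc -(∑ k ∈ Finset.range ((m + 1) / 2), ‖gam m a (k + 1)‖) * A
        = ∑ k ∈ Finset.range ((m + 1) / 2), -(‖gam m a (k + 1)‖ * A) := by
          rw [Finset.sum_neg_distrib, ← Finset.sum_mul, neg_mul]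
      _ ≤ _ := Finset.sum_le_sum key
  -- remaining linear arithmetic
  have e2 : |(rmC m a).re| ≤ ‖rmC m a‖ := Complex.abs_re_le_norm _
  have hlt0 : (0 : ℝ) ≤ Real.log t := Real.log_nonneg ht
  have hX : -(2 * ‖rmC m a‖ * A) ≤ -(rmC m a).re * Real.log t := by
    have s1 : ‖rmC m a‖ * Real.log t ≤ ‖rmC m a‖ * (2 * A) :=
      mul_le_mul_of_nonneg_left hlog1 (norm_nonneg _)
    have s2 : -(rmC m a).re * Real.log t ≥ -|(rmC m a).re| * Real.log t :=
      mul_le_mul_of_nonneg_right (neg_le_neg (le_abs_self _)) hlt0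
    have s3 : -|(rmC m a).re| * Real.log t ≥ -‖rmC m a‖ * Real.log t :=
      mul_le_mul_of_nonneg_right (neg_le_neg e2) hlt0
    nlinarith
  have hL2' : ((m : ℝ) / 2) * Real.log (t + 1) ≤ 2 * (m : ℝ) * A := by
    have : ((m : ℝ) / 2) * Real.log (t + 1) ≤ ((m : ℝ) / 2) * (4 * A) :=
      mul_le_mul_of_nonneg_left hlog2 (by positivity)
    linarith
  have hexp : A * (4 / ((m : ℝ) + 2) * t - C5 m a) =
      2 * (2 / ((m : ℝ) + 2) * (A * t)) -
        (2 * (∑ k ∈ Finset.range ((m + 1) / 2), ‖gam m a (k + 1)‖) + 4 * ‖rmC m a‖ +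
          2 * (m : ℝ) + 4) * A := by
    rw [C5]; ring
  have hct : (0 : ℝ) ≤ 2 / ((m : ℝ) + 2) * (A * t) := by positivity
  rw [hexp, hmain]
  linarith

theorem Egrow (hm : 1 ≤ m) :
    Tendsto (fun t : ℝ => Real.exp (2 * (Efun m a t).re) * (((t + 1) ^ ((m : ℝ) / 2))⁻¹))
      atTop atTop := by
  have hpos : (0 : ℝ) < 4 / ((m : ℝ) + 2) := by positivity
  have hlin : Tendsto (fun t : ℝ => 4 / ((m : ℝ) + 2) * t - C5 m a) atTop atTop := by
    have h1 : Tendsto (fun t : ℝ => 4 / ((m : ℝ) + 2) * t) atTop atTop :=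
      Tendsto.const_mul_atTop hpos tendsto_id
    simpa [sub_eq_add_neg] using tendsto_atTop_add_const_right atTop (-(C5 m a)) h1
  have hge : ∀ᶠ t : ℝ in atTop,
      4 / ((m : ℝ) + 2) * t - C5 m a ≤ 2 * (Efun m a t).re - ((m : ℝ) / 2) * Real.log (t + 1) := by
    filter_upwards [eventually_ge_atTop (1 : ℝ), hlin.eventually_ge_atTop 0] with t ht hlin0
    have hA : (1 : ℝ) ≤ t ^ ((m : ℝ) / 2) := Real.one_le_rpow ht (by positivity)
    have := L_lower m a hm t ht
    nlinarith
  have hinner : Tendsto (fun t : ℝ => 2 * (Efun m a t).re - ((m : ℝ) / 2) * Real.log (t + 1))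
      atTop atTop := tendsto_atTop_mono' atTop hge hlin
  have := Real.tendsto_exp_atTop.comp hinner
  apply this.congr'
  filter_upwards [eventually_ge_atTop (1 : ℝ)] with t ht
  have ht1 : (0 : ℝ) < t + 1 := by linarith
  simp only [Function.comp_apply]
  rw [Real.rpow_def_of_pos ht1, ← Real.exp_neg, ← Real.exp_add]
  congr 1
  ring

theorem cexp_sq (z : ℂ) : Complex.exp z ^ 2 = Complex.exp (2 * z) := by
  rw [two_mul, Complex.exp_add, sq]

theorem rayPt_zero (r : ℝ) : rayPt r 0 = (r : ℂ) := by
  simp [rayPt]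

theorem deriv_differentiable {F : ℂ → ℂ} (hF : Differentiable ℂ F) :
    Differentiable ℂ (deriv F) :=
  analyticOnNhd_univ_iff_differentiable.mp ((analyticOnNhd_univ_iff_differentiable.mpr hF).deriv)

theorem ray_unique (hm : 1 ≤ m) (F G : ℂ → ℂ)
    (hF : Differentiable ℂ F) (hG : Differentiable ℂ G)
    (hFode : ∀ X, deriv (deriv F) X = pot m a X * F X)
    (hGode : ∀ X, deriv (deriv G) X = pot m a X * G X)
    (hFlim : Tendsto (fun r : ℝ =>
      F (rayPt r 0) * rayPow r 0 (-(rmC m a)) * Complex.exp (Sfun m a r 0)) atTop (nhds 1))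
    (hGlim : Tendsto (fun r : ℝ =>
      G (rayPt r 0) * rayPow r 0 (-(rmC m a)) * Complex.exp (Sfun m a r 0)) atTop (nhds 1)) :
    F = G := by
  -- normalized limits
  have hP : Tendsto (fun r : ℝ => F r * Complex.exp (Efun m a r)) atTop (nhds 1) :=
    hFlim.congr fun r => by rw [mul_assoc, K_eq, rayPt_zero]
  have hQ : Tendsto (fun r : ℝ => G r * Complex.exp (Efun m a r)) atTop (nhds 1) :=
    hGlim.congr fun r => by rw [mul_assoc, K_eq, rayPt_zero]
  -- derivatives along the real ray
  have hF' : Differentiable ℂ (deriv F) := deriv_differentiable hF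
  have hG' : Differentiable ℂ (deriv G) := deriv_differentiable hG
  have hFd : ∀ t : ℝ, HasDerivAt (fun s : ℝ => F s) (deriv F t) t := fun t =>
    (hF t).hasDerivAt.comp_ofReal
  have hGd : ∀ t : ℝ, HasDerivAt (fun s : ℝ => G s) (deriv G t) t := fun t =>
    (hG t).hasDerivAt.comp_ofReal
  have hFd' : ∀ t : ℝ, HasDerivAt (fun s : ℝ => deriv F s) (deriv (deriv F) t) t := fun t =>
    (hF' t).hasDerivAt.comp_ofReal
  have hGd' : ∀ t : ℝ, HasDerivAt (fun s : ℝ => deriv G s) (deriv (deriv G) t) t := fun t =>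
    (hG' t).hasDerivAt.comp_ofReal
  -- the Wronskian is constant
  set w : ℝ → ℂ := fun t => F t * deriv G t - deriv F t * G t with hwdef
  have hw : ∀ t : ℝ, HasDerivAt w 0 t := by
    intro t
    have h1 := ((hFd t).mul (hGd' t)).sub ((hFd' t).mul (hGd t))
    refine h1.congr_deriv ?_
    rw [hFode, hGode]
    ring
  have hwconst : ∀ t : ℝ, w t = w 0 := fun t =>
    is_const_of_deriv_eq_zero (fun x => (hw x).differentiableAt) (fun x => (hw x).deriv) t 0
  set W : ℂ := w 0 with hWdef
  -- thresholds
  have hψ : Tendsto (fun t : ℝ => (((F t * Complex.exp (Efun m a t)) ^ 2)⁻¹)) atTop (nhds 1) := by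
    have := (hP.pow 2).inv₀ (by norm_num)
    simpa using this
  have h1 := Metric.tendsto_nhds.mp hP (1/2) (by norm_num)
  have h2 := Metric.tendsto_nhds.mp hψ (1/4) (by norm_num)
  obtain ⟨T, hT⟩ := eventually_atTop.mp ((h1.and h2).and (eventually_ge_atTop (1:ℝ)))
  have hT1 : ∀ t : ℝ, T ≤ t → (1:ℝ) ≤ t := fun t ht => (hT t ht).2
  have hPdist : ∀ t : ℝ, T ≤ t → ‖F t * Complex.exp (Efun m a t) - 1‖ < 1/2 := by
    intro t ht
    have := (hT t ht).1.1
    rwa [dist_eq_norm] at this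
  have hψdist : ∀ t : ℝ, T ≤ t →
      ‖((F t * Complex.exp (Efun m a t)) ^ 2)⁻¹ - 1‖ < 1/4 := by
    intro t ht
    have := (hT t ht).1.2
    rwa [dist_eq_norm] at this
  have hFne : ∀ t : ℝ, T ≤ t → F t ≠ 0 := by
    intro t ht h0
    have := hPdist t ht
    rw [h0, zero_mul, zero_sub, norm_neg, norm_one] at this
    norm_num at this
  -- u = G/F and its derivative
  set u : ℝ → ℂ := fun t => G t / F t with hudef
  have hu : ∀ s : ℝ, T ≤ s → HasDerivAt u
      (W * Complex.exp (2 * Efun m a s) * (((F s * Complex.exp (Efun m a s)) ^ 2)⁻¹)) s := by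
    intro s hs
    have hdiv := (hGd s).div (hFd s) (hFne s hs)
    refine hdiv.congr_deriv ?_
    have hnum : deriv G s * F s - G s * deriv F s = W := by
      rw [← hwconst s]
      simp only [hwdef]
      ring
    rw [hnum, ← cexp_sq]
    have hFs := hFne s hs
    have hes := Complex.exp_ne_zero (Efun m a s)
    field_simp
  have hu1 : Tendsto u atTop (nhds 1) := by
    have := hQ.div hP one_ne_zero
    simp only [div_one] at this
    apply this.congr
    intro t
    exact mul_div_mul_right _ _ (Complex.exp_ne_zero _)
  -- main step : W = 0
  have hW0 : W = 0 := by
    by_contra hW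
    -- constants
    set c₀ : ℝ := min 1 (1 / (40 * (C2 m a + 1))) with hc₀def
    have hC2nn : (0:ℝ) ≤ C2 m a := by
      unfold C2
      positivity
    have hc₀pos : 0 < c₀ := lt_min one_pos (by positivity)
    have hc₀le : c₀ * (C2 m a + 1) ≤ 1/40 := by
      have h := min_le_right 1 (1 / (40 * (C2 m a + 1)))
      calc c₀ * (C2 m a + 1) ≤ (1 / (40 * (C2 m a + 1))) * (C2 m a + 1) :=
            mul_le_mul_of_nonneg_right h (by positivity)
        _ = 1/40 := by field_simp
    set δ : ℝ → ℝ := fun t => c₀ * (((t + 1) ^ ((m:ℝ)/2))⁻¹) with hδdef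
    have hδpos : ∀ t : ℝ, 1 ≤ t → 0 < δ t := by
      intro t ht
      have : (0:ℝ) < (t + 1) ^ ((m:ℝ)/2) := Real.rpow_pos_of_pos (by linarith) _
      positivity
    have hδle : ∀ t : ℝ, 1 ≤ t → δ t ≤ 1 := by
      intro t ht
      have h1 : (1:ℝ) ≤ (t + 1) ^ ((m:ℝ)/2) := Real.one_le_rpow (by linarith) (by positivity)
      have h2 : ((t + 1) ^ ((m:ℝ)/2))⁻¹ ≤ 1 := by
        rw [inv_le_one_iff₀]; right; exact h1
      calc δ t = c₀ * (((t + 1) ^ ((m:ℝ)/2))⁻¹) := rfl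
        _ ≤ 1 * 1 := mul_le_mul (min_le_left _ _) h2 (by positivity) zero_le_one
        _ = 1 := mul_one 1
    -- the key pointwise lower bound for ‖u (t + δ t) - u t‖
    have key : ∀ t : ℝ, T ≤ t →
        ‖W‖/4 * (Real.exp (2 * (Efun m a t).re) * (((t+1) ^ ((m:ℝ)/2))⁻¹)) * c₀ ≤
          ‖u (t + δ t) - u t‖ := by
      intro t ht
      have ht1 : (1:ℝ) ≤ t := hT1 t ht
      have ht0 : (0:ℝ) < t := lt_of_lt_of_le one_pos ht1
      have hδt := hδpos t ht1
      have hδl := hδle t ht1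
      have hrp : (0:ℝ) < (t+1) ^ ((m:ℝ)/2) := Real.rpow_pos_of_pos (by linarith) _
      set d := δ t with hd
      have hsub : Set.Icc t (t + d) ⊆ Set.Ici T := fun s hs => le_trans ht hs.1
      have hint1 : ∀ s ∈ Set.Icc t (t + d), (1:ℝ) ≤ s := fun s hs => le_trans ht1 hs.1
      -- bound on the variation of Efun over the interval
      have hEvar : ∀ s ∈ Set.Icc t (t + d), ‖Efun m a s - Efun m a t‖ ≤ 1/40 := by
        intro s hs
        have hder : ∀ x ∈ Set.Icc t (t + d),
            HasDerivWithinAt (Efun m a) (Eder m a x) (Set.Icc t (t+d)) x :=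
          fun x hx =>
            (Efun_hasDeriv m a x (lt_of_lt_of_le one_pos (hint1 x hx))).hasDerivWithinAt
        have hbound : ∀ x ∈ Set.Icc t (t + d),
            ‖Eder m a x‖ ≤ (C2 m a + 1) * (t+1) ^ ((m:ℝ)/2) := by
          intro x hx
          have hx1 : (1:ℝ) ≤ x := hint1 x hx
          have hxle : x ≤ t + 1 := le_trans hx.2 (by linarith)
          calc ‖Eder m a x‖ ≤ C2 m a * x ^ ((m:ℝ)/2) := Eder_bound m a x hx1
            _ ≤ (C2 m a + 1) * (t+1) ^ ((m:ℝ)/2) := by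
                apply mul_le_mul (by linarith)
                  (Real.rpow_le_rpow (by linarith) (by linarith) (by positivity))
                  (by positivity) (by linarith)
        have hmvt0 := (convex_Icc t (t+d)).norm_image_sub_le_of_norm_hasDerivWithin_le hder
          hbound (Set.left_mem_Icc.mpr (by linarith)) hs
        calc ‖Efun m a s - Efun m a t‖
            ≤ (C2 m a + 1) * (t+1) ^ ((m:ℝ)/2) * ‖s - t‖ := hmvt0
          _ ≤ (C2 m a + 1) * (t+1) ^ ((m:ℝ)/2) * d := by
              apply mul_le_mul_of_nonneg_left _ (by positivity)
              rw [Real.norm_eq_abs, _root_.abs_of_nonneg (by linarith [hs.1] : (0:ℝ) ≤ s - t)]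
              linarith [hs.2]
          _ = (C2 m a + 1) * c₀ := by
              rw [hd, hδdef]
              field_simp
          _ ≤ 1/40 := by linarith [hc₀le]
      -- exponential ratio close to 1
      have hexpvar : ∀ s ∈ Set.Icc t (t + d),
          ‖Complex.exp (2 * (Efun m a s - Efun m a t)) - 1‖ ≤ 1/10 := by
        intro s hs
        have h0 : ‖(2 : ℂ) * (Efun m a s - Efun m a t)‖ ≤ 1/20 := by
          rw [norm_mul]
          have h2 : ‖(2:ℂ)‖ = 2 := by
            rw [show ((2:ℂ)) = ((2:ℝ):ℂ) by norm_num, Complex.norm_real]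
            norm_num
          rw [h2]
          linarith [hEvar s hs]
        have h1 : ‖(2 * (Efun m a s - Efun m a t))‖ ≤ 1 := by
          linarith
        have := Complex.norm_exp_sub_one_le h1
        linarith
      -- the fixed direction c and the real function v
      set c : ℂ := W * Complex.exp (2 * Efun m a t) with hcdef
      have hcne : c ≠ 0 := mul_ne_zero hW (Complex.exp_ne_zero _)
      have hcpos : 0 < ‖c‖ := norm_pos_iff.mpr hcne
      set v : ℝ → ℝ := fun s => ((starRingEnd ℂ) c * u s).re with hvdef
      have hvderiv : ∀ s ∈ Set.Icc t (t + d), HasDerivAt v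
          (((starRingEnd ℂ) c * (W * Complex.exp (2 * Efun m a s) *
            (((F s * Complex.exp (Efun m a s)) ^ 2)⁻¹))).re) s := by
        intro s hs
        have h1 := (hu s (hsub hs)).const_mul ((starRingEnd ℂ) c)
        exact Complex.reCLM.hasFDerivAt.comp_hasDerivAt s h1
      -- lower bound on the derivative of v
      have hρlow : ∀ s ∈ Set.Icc t (t + d),
          Complex.normSq c / 4 ≤ (((starRingEnd ℂ) c * (W * Complex.exp (2 * Efun m a s) *
            (((F s * Complex.exp (Efun m a s)) ^ 2)⁻¹))).re) := by
        intro s hs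
        have hψb := hψdist s (hsub hs)
        set ψ : ℂ := ((F s * Complex.exp (Efun m a s)) ^ 2)⁻¹ with hψs
        set η : ℂ := Complex.exp (2 * (Efun m a s - Efun m a t)) with hηs
        have hfact : (starRingEnd ℂ) c * (W * Complex.exp (2 * Efun m a s) * ψ)
            = (Complex.normSq c : ℂ) * (η * ψ) := by
          have h1 : W * Complex.exp (2 * Efun m a s) = c * η := by
            rw [hcdef, hηs, mul_assoc, ← Complex.exp_add]
            congr 2
            ring
          rw [h1]
          calc (starRingEnd ℂ) c * (c * η * ψ) = (c * (starRingEnd ℂ) c) * (η * ψ) := by ring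
            _ = (Complex.normSq c : ℂ) * (η * ψ) := by rw [Complex.mul_conj]
        rw [hfact]
        have hre : ((Complex.normSq c : ℂ) * (η * ψ)).re = Complex.normSq c * (η * ψ).re := by
          simp [Complex.mul_re]
        rw [hre]
        have hηψ : ‖η * ψ - 1‖ ≤ 3/4 := by
          have hψn : ‖ψ‖ ≤ 5/4 := by
            calc ‖ψ‖ = ‖(ψ - 1) + 1‖ := by ring_nf
              _ ≤ ‖ψ - 1‖ + ‖(1:ℂ)‖ := norm_add_le _ _
              _ ≤ 5/4 := by rw [norm_one]; linarith
          calc ‖η * ψ - 1‖ = ‖(η - 1) * ψ + (ψ - 1)‖ := by ring_nf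
            _ ≤ ‖(η - 1) * ψ‖ + ‖ψ - 1‖ := norm_add_le _ _
            _ = ‖η - 1‖ * ‖ψ‖ + ‖ψ - 1‖ := by rw [norm_mul]
            _ ≤ (1/10) * (5/4) + 1/4 := by
                have := hexpvar s hs
                apply add_le_add _ (le_of_lt hψb)
                apply mul_le_mul _ hψn (norm_nonneg _) (by norm_num)
                rw [hηs]
                exact this
            _ ≤ 3/4 := by norm_num
        have hrelow : (1:ℝ)/4 ≤ (η * ψ).re := by
          have h1 : ((η * ψ) - 1).re ≥ -‖η * ψ - 1‖ := by
            calc ((η * ψ) - 1).re ≥ -|((η * ψ) - 1).re| := neg_abs_le _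
              _ ≥ -‖η * ψ - 1‖ := by
                  have := Complex.abs_re_le_norm ((η * ψ) - 1)
                  linarith
          have h2 : ((η * ψ) - 1).re = (η * ψ).re - 1 := by simp [Complex.sub_re]
          linarith
        calc Complex.normSq c / 4 = Complex.normSq c * (1/4) := by ring
          _ ≤ Complex.normSq c * (η * ψ).re :=
              mul_le_mul_of_nonneg_left hrelow (Complex.normSq_nonneg c)
      -- mean value estimate
      have hcont : ContinuousOn v (Set.Icc t (t + d)) := fun s hs =>
        ((hvderiv s hs).continuousAt).continuousWithinAt
      have hdiffv : DifferentiableOn ℝ v (interior (Set.Icc t (t + d))) := fun s hs =>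
        ((hvderiv s (interior_subset hs)).differentiableAt).differentiableWithinAt
      have hderivlow : ∀ s ∈ interior (Set.Icc t (t + d)), Complex.normSq c / 4 ≤ deriv v s := by
        intro s hs
        rw [(hvderiv s (interior_subset hs)).deriv]
        exact hρlow s (interior_subset hs)
      have hmvt := (convex_Icc t (t + d)).mul_sub_le_image_sub_of_le_deriv hcont hdiffv hderivlow
        t (Set.left_mem_Icc.mpr (by linarith)) (t + d) (Set.right_mem_Icc.mpr (by linarith))
        (by linarith)
      -- conclude
      have hvdiff : v (t + d) - v t = ((starRingEnd ℂ) c * (u (t + d) - u t)).re := by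
        simp only [hvdef, mul_sub, Complex.sub_re]
      have hre_le : ((starRingEnd ℂ) c * (u (t + d) - u t)).re ≤ ‖c‖ * ‖u (t + d) - u t‖ := by
        calc ((starRingEnd ℂ) c * (u (t + d) - u t)).re
            ≤ ‖(starRingEnd ℂ) c * (u (t + d) - u t)‖ := Complex.re_le_norm _
          _ = ‖c‖ * ‖u (t + d) - u t‖ := by
              rw [norm_mul, RCLike.norm_conj]
      have hnormSq : Complex.normSq c = ‖c‖ * ‖c‖ := by
        rw [Complex.normSq_eq_norm_sq]
        ring
      have hcval : ‖c‖ = ‖W‖ * Real.exp (2 * (Efun m a t).re) := by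
        rw [hcdef, norm_mul, Complex.norm_exp]
        congr 2
        simp [Complex.mul_re]
      -- combine all inequalities
      have hchain : ‖c‖ * ‖c‖ / 4 * d ≤ ‖c‖ * ‖u (t + d) - u t‖ := by
        calc ‖c‖ * ‖c‖ / 4 * d = Complex.normSq c / 4 * ((t + d) - t) := by
              rw [hnormSq]; ring
          _ ≤ v (t + d) - v t := hmvt
          _ = ((starRingEnd ℂ) c * (u (t + d) - u t)).re := hvdiff
          _ ≤ ‖c‖ * ‖u (t + d) - u t‖ := hre_le
      have hfinal : ‖c‖ / 4 * d ≤ ‖u (t + d) - u t‖ := by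
        have := (mul_le_mul_iff_right₀ hcpos).mp (by linarith [hchain] :
          ‖c‖ * (‖c‖ / 4 * d) ≤ ‖c‖ * ‖u (t + d) - u t‖)
        linarith
      calc ‖W‖/4 * (Real.exp (2 * (Efun m a t).re) * (((t+1) ^ ((m:ℝ)/2))⁻¹)) * c₀
          = ‖c‖ / 4 * d := by rw [hcval, hd, hδdef]; ring
        _ ≤ ‖u (t + d) - u t‖ := hfinal
    -- contradiction
    have hΔ : Tendsto (fun t : ℝ => u (t + δ t) - u t) atTop (nhds 0) := by
      have hshift : Tendsto (fun t : ℝ => t + δ t) atTop atTop := by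
        apply tendsto_atTop_mono' atTop ?_ tendsto_id
        filter_upwards [eventually_ge_atTop (1:ℝ)] with t ht
        have := hδpos t ht
        simp only [id]
        linarith
      have h1 : Tendsto (fun t : ℝ => u (t + δ t)) atTop (nhds 1) := hu1.comp hshift
      simpa using h1.sub hu1
    have hBig : Tendsto (fun t : ℝ =>
        ‖W‖/4 * (Real.exp (2 * (Efun m a t).re) * (((t+1) ^ ((m:ℝ)/2))⁻¹)) * c₀) atTop atTop := by
      have hWpos : 0 < ‖W‖ := norm_pos_iff.mpr hW
      exact (Tendsto.const_mul_atTop (by positivity) (Egrow m a hm)).atTop_mul_const hc₀pos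
    obtain ⟨t, htT, hbig, hsmall⟩ :
        ∃ t : ℝ, T ≤ t ∧
          1 ≤ ‖W‖/4 * (Real.exp (2 * (Efun m a t).re) * (((t+1) ^ ((m:ℝ)/2))⁻¹)) * c₀ ∧
          ‖u (t + δ t) - u t‖ < 1 := by
      have e1 := eventually_ge_atTop T
      have e2 := hBig.eventually_ge_atTop 1
      have e3 : ∀ᶠ t : ℝ in atTop, ‖u (t + δ t) - u t‖ < 1 := by
        have := Metric.tendsto_nhds.mp hΔ 1 one_pos
        filter_upwards [this] with t ht
        rwa [dist_zero_right] at ht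
      obtain ⟨t, h⟩ := ((e1.and e2).and e3).exists
      exact ⟨t, h.1.1, h.1.2, h.2⟩
    have := key t htT
    linarith
  -- W = 0 : conclude equality on the ray
  have hueq : ∀ t : ℝ, T ≤ t → u t = u T := by
    intro t ht
    have hder : ∀ x ∈ Set.Icc T t, HasDerivWithinAt u ((fun _ => (0:ℂ)) x) (Set.Icc T t) x := by
      intro x hx
      have h0 := hu x hx.1
      rw [hW0] at h0
      simpa using h0.hasDerivWithinAt
    have hb := (convex_Icc T t).norm_image_sub_le_of_norm_hasDerivWithin_le hder
      (fun x _ => by simp : ∀ x ∈ Set.Icc T t, ‖(fun _ => (0:ℂ)) x‖ ≤ 0)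
      (Set.left_mem_Icc.mpr ht) (Set.right_mem_Icc.mpr ht)
    rw [zero_mul] at hb
    have := le_antisymm hb (norm_nonneg _)
    rw [norm_eq_zero, sub_eq_zero] at this
    exact this
  have huT : u T = 1 := by
    have hconst : Tendsto u atTop (nhds (u T)) := by
      apply Tendsto.congr' _ tendsto_const_nhds
      filter_upwards [eventually_ge_atTop T] with t ht
      exact (hueq t ht).symm
    exact tendsto_nhds_unique hconst hu1
  have hFG : ∀ t : ℝ, T ≤ t → F t = G t := by
    intro t ht
    have h1 : u t = 1 := by rw [hueq t ht, huT]
    have h2 : G t / F t = 1 := h1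
    exact ((div_eq_one_iff_eq (hFne t ht)).mp h2).symm
  have hfreq : ∃ᶠ z in nhdsWithin ((T+1 : ℝ) : ℂ) {((T+1 : ℝ) : ℂ)}ᶜ, F z = G z := by
    have htend : Tendsto (fun t : ℝ => (t : ℂ)) (nhdsWithin (T+1) (Set.Ioi (T+1)))
        (nhdsWithin ((T+1:ℝ):ℂ) {((T+1 : ℝ) : ℂ)}ᶜ) := by
      apply Filter.Tendsto.inf
      · exact Complex.continuous_ofReal.tendsto _
      · apply tendsto_principal_principal.mpr
        intro x hx
        simp only [Set.mem_Ioi] at hx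
        simp only [Set.mem_compl_iff, Set.mem_singleton_iff]
        intro h
        have := Complex.ofReal_injective h
        linarith
    apply htend.frequently
    apply Filter.Eventually.frequently
    filter_upwards [self_mem_nhdsWithin] with x hx
    have hx' : T ≤ x := by
      simp only [Set.mem_Ioi] at hx
      linarith
    exact hFG x hx'
  exact AnalyticOnNhd.eq_of_frequently_eq (analyticOnNhd_univ_iff_differentiable.mpr hF)
    (analyticOnNhd_univ_iff_differentiable.mpr hG) hfreq


end Stmt5aux

open Stmt5aux in
/-- the Stokes multiplier `C` of `Φ₋₁ = C(a)Φ₀ + Φ₁`, with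
`Φ₁(X,a) = ω^{-m/2-r_m(a)} Φ₀(ω⁻¹X, ω₋₁(a))` and `Φ₋₁(X,a) = ω^{m/2+r_m(a)} Φ₀(ωX, ω₁(a))`,
satisfies `conj(C(a)) + C(conj a) = 0` for every `a ∈ ℂ^m`. -/
theorem stmt5 (m : ℕ) (hm : 1 ≤ m)
    (Φ₀ : ℂ × (Fin m → ℂ) → ℂ)
    (hent : Differentiable ℂ Φ₀)
    (hode : ∀ a : Fin m → ℂ, ∀ X : ℂ,
      -(deriv (deriv fun Y => Φ₀ (Y, a)) X) + pot m a X * Φ₀ (X, a) = 0)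
    (hasym : ∀ a : Fin m → ℂ, SibAsymp m a fun X => Φ₀ (X, a))
    (C : (Fin m → ℂ) → ℂ)
    (hC : ∀ (X : ℂ) (a : Fin m → ℂ),
      omPow m ((m : ℂ) / 2 + rmC m a) * Φ₀ (om m * X, omAct m 1 a) =
        C a * Φ₀ (X, a) +
          omPow m (-((m : ℂ) / 2) - rmC m a) * Φ₀ ((om m)⁻¹ * X, omAct m (-1) a))
    (a : Fin m → ℂ) :
    (starRingEnd ℂ) (C a) + C (fun j => (starRingEnd ℂ) (a j)) = 0 := by
  have hpi : (0:ℝ) < 3 * Real.pi / (m + 2) := by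
    have := Real.pi_pos
    positivity
  have h0ray : |(0:ℝ)| < 3 * Real.pi / (m + 2) := by
    rw [abs_zero]; exact hpi
  -- the conjugation symmetry of Φ₀
  have hsym : ∀ (b : Fin m → ℂ) (Z : ℂ),
      conj' (Φ₀ (Z, b)) = Φ₀ (conj' Z, fun j => conj' (b j)) := by
    intro b Z
    set bbar : Fin m → ℂ := fun j => conj' (b j) with hbbar
    have hbb : (fun j => conj' (bbar j)) = b := by
      funext j
      simp [hbbar]
    -- differentiability
    have hFbdiff : Differentiable ℂ (fun Z : ℂ => Φ₀ (Z, b)) :=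
      hent.comp (differentiable_id.prodMk (differentiable_const _))
    have hFbbardiff : Differentiable ℂ (fun Z : ℂ => Φ₀ (Z, bbar)) :=
      hent.comp (differentiable_id.prodMk (differentiable_const _))
    have hFbbar' : Differentiable ℂ (deriv (fun Z : ℂ => Φ₀ (Z, bbar))) :=
      Stmt5aux.deriv_differentiable hFbbardiff
    have hGbd : ∀ Y : ℂ, HasDerivAt (fun Z : ℂ => conj' (Φ₀ (conj' Z, bbar)))
        (conj' (deriv (fun Z : ℂ => Φ₀ (Z, bbar)) (conj' Y))) Y := fun Y =>
      hasDerivAt_conj_conj ((hFbbardiff _).hasDerivAt)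
    have hGbdiff : Differentiable ℂ (fun Z : ℂ => conj' (Φ₀ (conj' Z, bbar))) := fun Y =>
      (hGbd Y).differentiableAt
    have hderivGb : deriv (fun Z : ℂ => conj' (Φ₀ (conj' Z, bbar)))
        = fun Y => conj' (deriv (fun Z : ℂ => Φ₀ (Z, bbar)) (conj' Y)) :=
      funext fun Y => (hGbd Y).deriv
    have hGbd2 : ∀ Y : ℂ, HasDerivAt (deriv (fun Z : ℂ => conj' (Φ₀ (conj' Z, bbar))))
        (conj' (deriv (deriv (fun Z : ℂ => Φ₀ (Z, bbar))) (conj' Y))) Y := by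
      intro Y
      rw [hderivGb]
      exact hasDerivAt_conj_conj ((hFbbar' _).hasDerivAt)
    -- ODEs
    have hFode : ∀ X : ℂ, deriv (deriv (fun Z : ℂ => Φ₀ (Z, b))) X
        = pot m b X * Φ₀ (X, b) := by
      intro X
      linear_combination -(hode b X)
    have hGode : ∀ X : ℂ, deriv (deriv (fun Z : ℂ => conj' (Φ₀ (conj' Z, bbar)))) X
        = pot m b X * conj' (Φ₀ (conj' X, bbar)) := by
      intro X
      rw [(hGbd2 X).deriv]
      have h1 : deriv (deriv (fun Z : ℂ => Φ₀ (Z, bbar))) (conj' X)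
          = pot m bbar (conj' X) * Φ₀ (conj' X, bbar) := by
        linear_combination -(hode bbar (conj' X))
      rw [h1, map_mul]
      congr 1
      have := pot_conj m bbar (conj' X)
      rw [hbb] at this
      rw [← this, Complex.conj_conj]
    -- asymptotics
    have hFlim : Tendsto (fun r : ℝ => Φ₀ (rayPt r 0, b) * rayPow r 0 (-(rmC m b))
        * Complex.exp (Sfun m b r 0)) atTop (nhds 1) := hasym b 0 h0ray
    have hGlim : Tendsto (fun r : ℝ => conj' (Φ₀ (conj' (rayPt r 0), bbar))
        * rayPow r 0 (-(rmC m b)) * Complex.exp (Sfun m b r 0)) atTop (nhds 1) := by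
      have hbase := hasym bbar 0 h0ray
      have hrm : conj' (rmC m bbar) = rmC m b := by
        have := rmC_conj m bbar
        rw [hbb] at this
        rw [← this]
      have hconj : Tendsto (fun r : ℝ => conj' (Φ₀ (rayPt r 0, bbar)
          * rayPow r 0 (-(rmC m bbar)) * Complex.exp (Sfun m bbar r 0))) atTop (nhds 1) := by
        have h := (Complex.continuous_conj.tendsto 1).comp hbase
        simpa only [Function.comp_def, map_one] using h
      apply hconj.congr
      intro r
      have hpt : conj' (rayPt r 0) = rayPt r 0 := by rw [rayPt_conj, neg_zero]
      have hpow : conj' (rayPow r 0 (-(rmC m bbar))) = rayPow r 0 (-(rmC m b)) := by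
        rw [rayPow_conj, neg_zero, map_neg, hrm]
      have hsf : conj' (Complex.exp (Sfun m bbar r 0)) = Complex.exp (Sfun m b r 0) := by
        have hS : conj' (Sfun m bbar r 0) = Sfun m b r 0 := by
          have := Sfun_conj m bbar r 0
          rw [hbb, neg_zero] at this
          exact this
        rw [← Complex.exp_conj, hS]
      rw [map_mul, map_mul, hpow, hsf, hpt]
    have := Stmt5aux.ray_unique m b hm (fun Z : ℂ => Φ₀ (Z, b))
      (fun Z : ℂ => conj' (Φ₀ (conj' Z, bbar))) hFbdiff hGbdiff hFode hGode hFlim hGlim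
    have hZ := congrFun this Z
    rw [hZ, Complex.conj_conj]
  -- transform the connection identity by conjugation
  set abar : Fin m → ℂ := fun j => conj' (a j) with habar
  have haa : (fun j => conj' (abar j)) = a := by
    funext j
    simp [habar]
  have hrmbar : conj' (rmC m abar) = rmC m a := by
    have := rmC_conj m abar
    rw [haa] at this
    rw [← this]
  -- an X where Φ₀ does not vanish
  obtain ⟨X₀, hX₀⟩ : ∃ X₀ : ℂ, Φ₀ (X₀, a) ≠ 0 := by
    have h1 := Metric.tendsto_nhds.mp (hasym a 0 h0ray) (1/2) (by norm_num)
    obtain ⟨r, hr⟩ := h1.exists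
    refine ⟨rayPt r 0, fun h0 => ?_⟩
    simp only [h0, zero_mul, dist_zero_left, norm_one] at hr
    norm_num at hr
  -- the two connection identities
  have h1 := hC X₀ a
  have h2 := congrArg conj' (hC (conj' X₀) abar)
  rw [map_add, map_mul, map_mul, map_mul] at h2
  have ea : conj' (omPow m ((m:ℂ)/2 + rmC m abar)) = omPow m (-((m:ℂ)/2) - rmC m a) := by
    rw [omPow_conj]
    congr 1
    rw [map_add, hrmbar, map_div₀]
    simp only [map_ofNat, Complex.conj_natCast]
    ring
  have eb : conj' (Φ₀ (om m * conj' X₀, omAct m 1 abar)) = Φ₀ ((om m)⁻¹ * X₀, omAct m (-1) a) := by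
    have h1 : conj' (om m * conj' X₀) = (om m)⁻¹ * X₀ := by
      rw [map_mul, om_conj, Complex.conj_conj]
    have e := omAct_conj m 1 a
    rw [← habar] at e
    rw [hsym, h1, e]
  have ec : conj' (Φ₀ (conj' X₀, abar)) = Φ₀ (X₀, a) := by
    rw [hsym, Complex.conj_conj, haa]
  have ed : conj' (omPow m (-((m:ℂ)/2) - rmC m abar)) = omPow m ((m:ℂ)/2 + rmC m a) := by
    rw [omPow_conj]
    congr 1
    rw [map_sub, hrmbar, map_neg, map_div₀]
    simp only [map_ofNat, Complex.conj_natCast]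
    ring
  have ee : conj' (Φ₀ ((om m)⁻¹ * conj' X₀, omAct m (-1) abar)) = Φ₀ (om m * X₀, omAct m 1 a) := by
    have h1 : conj' ((om m)⁻¹ * conj' X₀) = om m * X₀ := by
      rw [map_mul, map_inv₀, om_conj, inv_inv, Complex.conj_conj]
    have e := omAct_conj m (-1) a
    rw [neg_neg, ← habar] at e
    rw [hsym, h1, e]
  rw [ea, eb, ec, ed, ee] at h2
  -- combine
  have hzero : (C a + conj' (C abar)) * Φ₀ (X₀, a) = 0 := by
    linear_combination -h1 - h2
  have hsum : C a + conj' (C abar) = 0 := by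
    rcases mul_eq_zero.mp hzero with h | h
    · exact h
    · exact absurd h hX₀
  have := congrArg conj' hsum
  rw [map_add, map_zero, Complex.conj_conj] at this
  exact this
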